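/- Let Λ : ℂ → ℂ be an entire function that is real and nonnegative on the real axis for arguments ≥ k/2, whose zeros ρ all satisfy |Re(ρ) − k/2| < 1/2, and which admits a Hadamard factorization Λ(s) = e^{A} · Π_{ρ real} (1 − s/ρ) · Π_{Im(ρ)>0} |1 − s/ρ|² for real s, where the real zeros ρ all satisfy |ρ − k/2| < 1/2. Then Λ is monotonically nondecreasing on the ray [k/2 + 1/2, ∞), and 0 ≤ Λ(k/2) ≤ Λ(k/2 + 1) ≤ Λ(k/2 + 2) ≤ ⋯. -/

import Mathlib

open Real Filter Topology

section ProdLemmas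

variable {ι : Type*} {f g : ι → ℝ} {p q : ℝ}

lemma my_hasProd_zero (i₀ : ι) (h : f i₀ = 0) : HasProd f 0 := by
  have hev : (fun F : Finset ι => ∏ i ∈ F, f i) =ᶠ[atTop] fun _ => (0:ℝ) := by
    filter_upwards [eventually_ge_atTop ({i₀} : Finset ι)] with F hF
    exact Finset.prod_eq_zero (Finset.singleton_subset_iff.mp hF) h
  exact (tendsto_congr' hev).mpr tendsto_const_nhds

lemma my_hasProd_abs (h : HasProd f p) : HasProd (fun i => |f i|) |p| := by
  have h2 := (continuous_abs.tendsto p).comp h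
  simpa only [HasProd, Function.comp_def, Finset.abs_prod] using h2

lemma my_exists_pos_cofinite (h : HasProd f p) (hp : p ≠ 0) :
    ∃ F₀ : Finset ι, ∀ i, i ∉ F₀ → 0 < f i := by
  classical
  have hball : ∀ᶠ F in atTop, (∏ i ∈ F, f i) ∈ Metric.ball p (|p|/2) :=
    h (Metric.ball_mem_nhds p (by positivity : (0:ℝ) < |p|/2))
  rw [Filter.eventually_atTop] at hball
  obtain ⟨F₀, hF₀⟩ := hball
  refine ⟨F₀, fun i hi => ?_⟩
  have h1 := hF₀ F₀ le_rfl
  have h2 := hF₀ (insert i F₀) (Finset.subset_insert i F₀)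
  rw [Finset.prod_insert hi] at h2
  rw [Metric.mem_ball, Real.dist_eq] at h1 h2
  by_contra hfi
  push_neg at hfi
  rcases hp.lt_or_gt with hp' | hp'
  · rw [abs_of_neg hp'] at h1 h2
    have e1 := (abs_lt.mp h1).2
    have e2 := (abs_lt.mp h2).2
    nlinarith
  · rw [abs_of_pos hp'] at h1 h2
    have e1 := (abs_lt.mp h1).1
    have e2 := (abs_lt.mp h2).1
    nlinarith

lemma my_hasProd_le (hfg : ∀ i, f i ≤ g i) (hf0 : ∀ i, 0 ≤ f i)
    (hf : HasProd f p) (hg : HasProd g q) : p ≤ q :=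
  le_of_tendsto_of_tendsto' hf hg fun F =>
    Finset.prod_le_prod (fun i _ => hf0 i) (fun i _ => hfg i)

lemma my_exists_bound (hv : ∀ i, 0 < f i) (h : HasProd f p) :
    ∃ M : ℝ, ∀ G : Finset ι, ∏ i ∈ G, max (f i) 1 ≤ M := by
  classical
  have hball : ∀ᶠ F in atTop, (∏ i ∈ F, f i) ∈ Metric.ball p 1 :=
    h (Metric.ball_mem_nhds p one_pos)
  rw [Filter.eventually_atTop] at hball
  obtain ⟨F₀, hF₀⟩ := hball
  set c : ℝ := ∏ i ∈ F₀, min (f i) 1 with hc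
  have hcpos : 0 < c := Finset.prod_pos fun i _ => lt_min (hv i) one_pos
  refine ⟨(p+1)/c, fun G => ?_⟩
  set G₁ : Finset ι := G.filter (fun i => 1 ≤ f i) with hG₁
  have key : ∏ i ∈ G, max (f i) 1 = ∏ i ∈ G₁, f i := by
    rw [← Finset.prod_filter_mul_prod_filter_not G (fun i => 1 ≤ f i)]
    have e1 : ∏ i ∈ G₁, max (f i) 1 = ∏ i ∈ G₁, f i :=
      Finset.prod_congr rfl fun i hi => max_eq_left (Finset.mem_filter.mp hi).2
    have e2 : ∏ i ∈ G.filter (fun i => ¬ 1 ≤ f i), max (f i) 1 = 1 :=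
      Finset.prod_eq_one fun i hi =>
        max_eq_right (le_of_not_ge (Finset.mem_filter.mp hi).2)
    rw [e1, e2, mul_one]
  rw [key]
  have hsub : G₁ ⊆ G₁ ∪ F₀ := Finset.subset_union_left
  have hsplit := Finset.prod_sdiff hsub (f := f)
  have hs1 := hF₀ (G₁ ∪ F₀) Finset.subset_union_right
  rw [Metric.mem_ball, Real.dist_eq] at hs1
  have hub : ∏ i ∈ G₁ ∪ F₀, f i < p + 1 := by
    have := (abs_lt.mp hs1).2; linarith
  set T : Finset ι := (G₁ ∪ F₀) \ G₁ with hT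
  have hTsub : T ⊆ F₀ := by
    intro x hx
    rw [hT, Finset.mem_sdiff, Finset.mem_union] at hx
    tauto
  have hcT : c ≤ ∏ i ∈ T, f i := by
    have h1 : c ≤ ∏ i ∈ T, min (f i) 1 := by
      have := Finset.prod_sdiff hTsub (f := fun i => min (f i) 1)
      have h2 : ∏ i ∈ F₀ \ T, min (f i) 1 ≤ 1 :=
        Finset.prod_le_one (fun i _ => le_min (hv i).le zero_le_one)
          (fun i _ => min_le_right _ _)
      have h3 : 0 ≤ ∏ i ∈ T, min (f i) 1 :=
        Finset.prod_nonneg (fun i _ => le_min (hv i).le zero_le_one)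
      nlinarith [this]
    exact h1.trans (Finset.prod_le_prod
      (fun i _ => le_min (hv i).le zero_le_one) (fun i _ => min_le_left _ _))
  have hG₁pos : 0 < ∏ i ∈ G₁, f i := Finset.prod_pos fun i _ => hv i
  rw [le_div_iff₀ hcpos]
  calc (∏ i ∈ G₁, f i) * c ≤ (∏ i ∈ G₁, f i) * ∏ i ∈ T, f i :=
        mul_le_mul_of_nonneg_left hcT hG₁pos.le
    _ = ∏ i ∈ G₁ ∪ F₀, f i := by rw [mul_comm]; exact hsplit
    _ ≤ p + 1 := hub.le

lemma my_multipliable_of_bounded (h0 : ∀ i, 0 ≤ f i) (M : ℝ)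
    (hM : ∀ G : Finset ι, ∏ i ∈ G, max (f i) 1 ≤ M) : Multipliable f := by
  classical
  set P : Finset ι → ℝ := fun G => ∏ i ∈ G, max (f i) 1 with hP
  set Q : Finset ι → ℝ := fun G => ∏ i ∈ G, min (f i) 1 with hQ
  have hPmono : Monotone P := by
    intro G G' hGG'
    show ∏ i ∈ G, max (f i) 1 ≤ ∏ i ∈ G', max (f i) 1
    have hsp := Finset.prod_sdiff (f := fun i => max (f i) 1) hGG'
    have h1 : (1:ℝ) ≤ ∏ i ∈ G' \ G, max (f i) 1 := by
      have := Finset.prod_le_prod (s := G' \ G) (f := fun _ => (1:ℝ))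
        (g := fun i => max (f i) 1) (fun i _ => zero_le_one) (fun i _ => le_max_right _ 1)
      simpa using this
    have h2 : 0 ≤ ∏ i ∈ G, max (f i) 1 :=
      Finset.prod_nonneg fun i _ => le_trans zero_le_one (le_max_right _ 1)
    nlinarith [hsp]
  have hPbdd : BddAbove (Set.range P) := ⟨M, by rintro x ⟨G, rfl⟩; exact hM G⟩
  have hPt : Tendsto P atTop (𝓝 (⨆ G, P G)) := tendsto_atTop_ciSup hPmono hPbdd
  have hQanti : Antitone Q := by
    intro G G' h
    have hsp := Finset.prod_sdiff h (f := fun i => min (f i) 1)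
    have h2 : ∏ i ∈ G' \ G, min (f i) 1 ≤ 1 :=
      Finset.prod_le_one (fun i _ => le_min (h0 i) zero_le_one)
        (fun i _ => min_le_right _ _)
    have h3 : 0 ≤ Q G := Finset.prod_nonneg (fun i _ => le_min (h0 i) zero_le_one)
    calc Q G' = (∏ i ∈ G' \ G, min (f i) 1) * Q G := hsp.symm
      _ ≤ 1 * Q G := mul_le_mul_of_nonneg_right h2 h3
      _ = Q G := one_mul _
  have hQbdd : BddBelow (Set.range Q) := ⟨0, by
    rintro x ⟨G, rfl⟩
    exact Finset.prod_nonneg (fun i _ => le_min (h0 i) zero_le_one)⟩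
  have hQt : Tendsto Q atTop (𝓝 (⨅ G, Q G)) := tendsto_atTop_ciInf hQanti hQbdd
  refine ⟨(⨆ G, P G) * (⨅ G, Q G), ?_⟩
  have heq : (fun G : Finset ι => ∏ i ∈ G, f i) = fun G => P G * Q G := by
    funext G
    rw [hP, hQ, ← Finset.prod_mul_distrib]
    refine Finset.prod_congr rfl fun i _ => ?_
    rcases le_total (f i) 1 with h | h
    · rw [max_eq_right h, min_eq_left h, one_mul]
    · rw [max_eq_left h, min_eq_right h, mul_one]
  rw [HasProd, heq]
  exact hPt.mul hQt

lemma my_multipliable_of_abs (hne : ∀ i, f i ≠ 0) (hfin : {i | f i < 0}.Finite)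
    (h : Multipliable fun i => |f i|) : Multipliable f := by
  classical
  obtain ⟨r, hr⟩ := h
  set S : Finset ι := hfin.toFinset with hS
  refine ⟨(∏ i ∈ S, (f i / |f i|)) * r, ?_⟩
  have hev : (fun F : Finset ι => ∏ i ∈ F, f i) =ᶠ[atTop]
      (fun F => (∏ i ∈ S, (f i / |f i|)) * ∏ i ∈ F, |f i|) := by
    filter_upwards [eventually_ge_atTop S] with F hF
    have h1 : ∏ i ∈ F, f i = (∏ i ∈ F, (f i / |f i|)) * ∏ i ∈ F, |f i| := by
      rw [← Finset.prod_mul_distrib]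
      exact Finset.prod_congr rfl fun i _ =>
        (div_mul_cancel₀ (f i) (abs_ne_zero.mpr (hne i))).symm
    have h2 : ∏ i ∈ S, (f i / |f i|) = ∏ i ∈ F, (f i / |f i|) := by
      refine Finset.prod_subset hF fun i _ hiS => ?_
      have hpos : 0 < f i := by
        rcases (hne i).lt_or_gt with hlt | hgt
        · exact absurd (by rw [hS, Set.Finite.mem_toFinset]; exact hlt) hiS
        · exact hgt
      rw [abs_of_pos hpos, div_self (ne_of_gt hpos)]
    rw [h1, h2]
  exact (tendsto_congr' hev).mpr (hr.const_mul _)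

end ProdLemmas
/-- Lemma 2.2 of the paper: an entire function, real and nonnegative on the real ray
[k/2, ∞), with zeros in the strip |Re ρ − k/2| < 1/2 and admitting a Hadamard-type
factorization over its zeros for real arguments, is monotone nondecreasing on
[k/2 + 1/2, ∞) and satisfies 0 ≤ Λ(k/2) ≤ Λ(k/2 + 1) ≤ Λ(k/2 + 2) ≤ ⋯. -/
theorem stmt_15 (k : ℕ) (hk : 0 < k) (hke : Even k)
    (Λ : ℂ → ℂ) (hent : Differentiable ℂ Λ)
    (hreal : ∀ x : ℝ, (k : ℝ) / 2 ≤ x → (Λ x).im = 0 ∧ 0 ≤ (Λ x).re)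
    (hzeros : ∀ z : ℂ, Λ z = 0 → |z.re - (k : ℝ) / 2| < 1 / 2)
    (ι : Type) (ρ : ι → ℂ) (A : ℝ)
    (hρzero : ∀ i, Λ (ρ i) = 0)
    (hρstrip : ∀ i, |(ρ i).re - (k : ℝ) / 2| < 1 / 2)
    (hHad : ∀ s : ℝ,
      (Λ s).re = Real.exp A * ∏' i : ι,
        (if (ρ i).im = 0 then (1 - s / (ρ i).re)
         else if 0 < (ρ i).im then ‖1 - (s : ℂ) / ρ i‖ ^ 2 else 1)) :
    MonotoneOn (fun x : ℝ => (Λ x).re) (Set.Ici ((k : ℝ) / 2 + 1 / 2)) ∧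
    (0 ≤ (Λ ((k : ℝ) / 2)).re ∧
      ∀ j : ℕ, (Λ ((k : ℝ) / 2 + j)).re ≤ (Λ ((k : ℝ) / 2 + j + 1)).re) := by
  have hk2 : 2 ≤ k := by obtain ⟨t, rfl⟩ := hke; omega
  set m : ℝ := (k : ℝ) / 2 with hm
  have hm1 : (1:ℝ) ≤ m := by
    have h2 : (2:ℝ) ≤ (k:ℝ) := by exact_mod_cast hk2
    rw [hm]; linarith
  have ha : ∀ i, m - 1/2 < (ρ i).re ∧ (ρ i).re < m + 1/2 := by
    intro i
    have := abs_lt.mp (hρstrip i)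
    constructor <;> linarith [this.1, this.2]
  have ha_pos : ∀ i, 0 < (ρ i).re := fun i => by linarith [(ha i).1]
  set F : ℝ → ι → ℝ := fun s i =>
    if (ρ i).im = 0 then (1 - s / (ρ i).re)
    else if 0 < (ρ i).im then ‖1 - (s : ℂ) / ρ i‖ ^ 2 else 1 with hFdef
  have hHad' : ∀ s : ℝ, (Λ s).re = Real.exp A * ∏' i : ι, F s i := by
    intro s; simpa only [hFdef] using hHad s
  have hcont : Continuous (fun x : ℝ => (Λ (x:ℂ)).re) :=
    Complex.continuous_re.comp (hent.continuous.comp Complex.continuous_ofReal)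
  -- positivity of Λ on the ray
  have hLpos : ∀ s : ℝ, m + 1/2 ≤ s → 0 < (Λ (s:ℂ)).re := by
    intro s hs
    have hms : m ≤ s := by linarith
    rcases eq_or_lt_of_le (hreal s hms).2 with h | h
    · exfalso
      have hzero : Λ (s:ℂ) = 0 := by
        apply Complex.ext
        · simp [← h]
        · simp [(hreal s hms).1]
      have hz := hzeros _ hzero
      rw [Complex.ofReal_re, abs_lt] at hz
      linarith [hz.2]
    · exact h
  -- description of the factors
  have hF_real : ∀ (s:ℝ) i, (ρ i).im = 0 → F s i = 1 - s / (ρ i).re := by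
    intro s i h; rw [hFdef]; simp only [if_pos h]
  have hF_cpos : ∀ (s:ℝ) i, 0 < (ρ i).im →
      F s i = ‖1 - (s : ℂ) / ρ i‖ ^ 2 := by
    intro s i h
    rw [hFdef]
    simp only [if_neg (ne_of_gt h), if_pos h]
  have hF_cneg : ∀ (s:ℝ) i, (ρ i).im ≠ 0 → ¬ (0 < (ρ i).im) → F s i = 1 := by
    intro s i h0 h1
    rw [hFdef]
    simp only [if_neg h0, if_neg h1]
  have hden_pos : ∀ i, 0 < (ρ i).re^2 + (ρ i).im^2 :=
    fun i => add_pos_of_pos_of_nonneg (pow_pos (ha_pos i) 2) (sq_nonneg _)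
  have hF_formula : ∀ (s:ℝ) i, 0 < (ρ i).im →
      F s i = ((s - (ρ i).re)^2 + (ρ i).im^2) / ((ρ i).re^2 + (ρ i).im^2) := by
    intro s i h
    rw [hF_cpos s i h]
    have hρne : ρ i ≠ 0 := fun hc => by
      rw [hc] at h; simp at h
    have h1 : (1:ℂ) - (s:ℂ)/ρ i = (ρ i - s)/ρ i := by field_simp
    rw [h1, norm_div, div_pow, Complex.sq_norm, Complex.sq_norm, Complex.normSq_apply,
      Complex.normSq_apply]
    simp only [Complex.sub_re, Complex.sub_im, Complex.ofReal_re, Complex.ofReal_im, sub_zero]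
    congr 1 <;> ring
  have hF_nonneg_c : ∀ (s:ℝ) i, (ρ i).im ≠ 0 → 0 ≤ F s i := by
    intro s i h0
    by_cases h1 : 0 < (ρ i).im
    · rw [hF_cpos s i h1]; positivity
    · rw [hF_cneg s i h0 h1]; norm_num
  have hF_realneg : ∀ (s:ℝ), m + 1/2 ≤ s → ∀ i, (ρ i).im = 0 → F s i < 0 := by
    intro s hs i h0
    rw [hF_real s i h0]
    have hap := ha_pos i
    have : 1 < s / (ρ i).re := (one_lt_div hap).mpr (by linarith [(ha i).2])
    linarith
  have hFne : ∀ (s:ℝ), m + 1/2 ≤ s → ∀ i, F s i ≠ 0 := by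
    intro s hs i
    by_cases h0 : (ρ i).im = 0
    · exact ne_of_lt (hF_realneg s hs i h0)
    by_cases h1 : 0 < (ρ i).im
    · rw [hF_formula s i h1]
      have hb2 : 0 < (ρ i).im ^ 2 := pow_two_pos_of_ne_zero h0
      have hnum : 0 < (s - (ρ i).re)^2 + (ρ i).im^2 :=
        add_pos_of_nonneg_of_pos (sq_nonneg _) hb2
      exact ne_of_gt (div_pos hnum (hden_pos i))
    · rw [hF_cneg s i h0 h1]; norm_num
  -- abs comparison of factors
  have habs_le : ∀ s₁ s₂ : ℝ,
      (∀ a : ℝ, m - 1/2 < a → a < m + 1/2 → |s₁ - a| ≤ s₂ - a) →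
      ∀ i, |F s₁ i| ≤ |F s₂ i| := by
    intro s₁ s₂ hcond i
    by_cases h0 : (ρ i).im = 0
    · rw [hF_real s₁ i h0, hF_real s₂ i h0]
      set a := (ρ i).re with hadef
      have hap : 0 < a := ha_pos i
      have e1 : (1:ℝ) - s₁/a = (a - s₁)/a := by field_simp
      have e2 : (1:ℝ) - s₂/a = (a - s₂)/a := by field_simp
      rw [e1, e2, abs_div, abs_div, abs_of_pos hap]
      have hc := hcond a (ha i).1 (ha i).2
      have hnum : |a - s₁| ≤ |a - s₂| := by
        rw [abs_sub_comm a s₁, abs_sub_comm a s₂]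
        exact hc.trans (le_abs_self _)
      gcongr
    by_cases h1 : 0 < (ρ i).im
    · rw [hF_formula s₁ i h1, hF_formula s₂ i h1]
      have hc := hcond (ρ i).re (ha i).1 (ha i).2
      have habs := abs_le.mp hc
      have hsq : (s₁ - (ρ i).re)^2 ≤ (s₂ - (ρ i).re)^2 :=
        sq_le_sq' (by linarith [habs.1]) habs.2
      rw [abs_of_nonneg (by positivity), abs_of_nonneg (by positivity)]
      gcongr
    · rw [hF_cneg s₁ i h0 h1, hF_cneg s₂ i h0 h1]
  -- downward transfer of multipliability
  have hdown : ∀ s₁ s₂ : ℝ, m + 1/2 ≤ s₂ →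
      (∀ a : ℝ, m - 1/2 < a → a < m + 1/2 → |s₁ - a| ≤ s₂ - a) →
      (∀ i, F s₁ i ≠ 0) → Multipliable (F s₂) → Multipliable (F s₁) := by
    intro s₁ s₂ hs₂ hcond hne hmul
    have hp₂ := hmul.hasProd
    have hp₂pos : 0 < ∏' i, F s₂ i := by
      have h1 := hHad' s₂
      have h2 := hLpos s₂ hs₂
      by_contra hc
      push_neg at hc
      nlinarith [Real.exp_pos A]
    have habs₂ := my_hasProd_abs hp₂
    obtain ⟨M, hM⟩ := my_exists_bound
      (fun i => abs_pos.mpr (hFne s₂ hs₂ i)) habs₂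
    have hmul₁ : Multipliable fun i => |F s₁ i| := by
      refine my_multipliable_of_bounded (fun i => abs_nonneg _) M (fun G => ?_)
      refine le_trans (Finset.prod_le_prod (fun i _ => ?_) (fun i _ => ?_)) (hM G)
      · exact le_trans zero_le_one (le_max_right _ 1)
      · exact max_le_max (habs_le s₁ s₂ hcond i) le_rfl
    obtain ⟨F₀, hF₀⟩ := my_exists_pos_cofinite hp₂ (ne_of_gt hp₂pos)
    have hfin : {i | F s₁ i < 0}.Finite := by
      refine Set.Finite.subset F₀.finite_toSet (fun i hi => ?_)
      by_contra hiF₀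
      have him : (ρ i).im = 0 := by
        by_contra h
        exact absurd hi (not_lt.mpr (hF_nonneg_c s₁ i h))
      exact absurd (hF₀ i (by simpa using hiF₀))
        (not_lt.mpr (hF_realneg s₂ hs₂ i him).le)
    exact my_multipliable_of_abs hne hfin hmul₁
  -- main comparison when multipliable at the larger point
  have hcomp : ∀ s₁ s₂ : ℝ, m + 1/2 ≤ s₂ →
      (∀ a : ℝ, m - 1/2 < a → a < m + 1/2 → |s₁ - a| ≤ s₂ - a) →
      Multipliable (F s₂) → (Λ (s₁:ℂ)).re ≤ (Λ (s₂:ℂ)).re := by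
    intro s₁ s₂ hs₂ hcond hmul
    have hp₂ := hmul.hasProd
    have hp₂pos : 0 < ∏' i, F s₂ i := by
      have h1 := hHad' s₂
      have h2 := hLpos s₂ hs₂
      by_contra hc
      push_neg at hc
      nlinarith [Real.exp_pos A]
    by_cases hzero : ∃ i, F s₁ i = 0
    · obtain ⟨i₀, hi₀⟩ := hzero
      have h0 : ∏' i, F s₁ i = 0 := (my_hasProd_zero i₀ hi₀).tprod_eq
      rw [hHad' s₁, h0, mul_zero]
      exact (hLpos s₂ hs₂).le
    push_neg at hzero
    have hmul₁ := hdown s₁ s₂ hs₂ hcond hzero hmul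
    have hp₁ := hmul₁.hasProd
    have h1 : ∏' i, F s₁ i ≤ |∏' i, F s₁ i| := le_abs_self _
    have h2 : |∏' i, F s₁ i| ≤ |∏' i, F s₂ i| :=
      my_hasProd_le (fun i => habs_le s₁ s₂ hcond i) (fun i => abs_nonneg _)
        (my_hasProd_abs hp₁) (my_hasProd_abs hp₂)
    rw [abs_of_pos hp₂pos] at h2
    rw [hHad' s₁, hHad' s₂]
    exact mul_le_mul_of_nonneg_left (h1.trans h2) (Real.exp_pos A).le
  -- ray condition helper
  have raycond : ∀ x y : ℝ, m + 1/2 ≤ x → x ≤ y →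
      ∀ a : ℝ, m - 1/2 < a → a < m + 1/2 → |x - a| ≤ y - a := by
    intro x y hx hxy a _ ha2
    rw [abs_of_nonneg (by linarith)]
    linarith
  -- non-multipliability gives the constant value
  have hNM : ∀ s t : ℝ, m + 1/2 ≤ s → s ≤ t → ¬ Multipliable (F s) →
      (Λ (t:ℂ)).re = Real.exp A := by
    intro s t hs hst hnm
    have hnt : ¬ Multipliable (F t) := fun h =>
      hnm (hdown s t (by linarith) (raycond s t hs hst) (hFne s hs) h)
    rw [hHad' t, tprod_eq_one_of_not_multipliable hnt, mul_one]
  -- monotonicity on the ray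
  have hmono : ∀ s₁ s₂ : ℝ, m + 1/2 ≤ s₁ → s₁ ≤ s₂ →
      (Λ (s₁:ℂ)).re ≤ (Λ (s₂:ℂ)).re := by
    intro s₁ s₂ hs₁ h12
    have hs₂ : m + 1/2 ≤ s₂ := le_trans hs₁ h12
    by_cases hm₂ : Multipliable (F s₂)
    · exact hcomp s₁ s₂ hs₂ (raycond s₁ s₂ hs₁ h12) hm₂
    have hA2 : (Λ (s₂:ℂ)).re = Real.exp A := hNM s₂ s₂ hs₂ le_rfl hm₂
    by_cases hm₁ : Multipliable (F s₁)
    swap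
    · rw [hA2, hHad' s₁, tprod_eq_one_of_not_multipliable hm₁, mul_one]
    set B : Set ℝ := {t | t ∈ Set.Icc s₁ s₂ ∧ Multipliable (F t)} with hB
    have hs₁B : s₁ ∈ B := ⟨⟨le_rfl, h12⟩, hm₁⟩
    have hBne : B.Nonempty := ⟨s₁, hs₁B⟩
    have hBbdd : BddAbove B := ⟨s₂, fun t ht => ht.1.2⟩
    set τ := sSup B with hτ
    have hτ1 : s₁ ≤ τ := le_csSup hBbdd hs₁B
    have hτ2 : τ ≤ s₂ := csSup_le hBne (fun t ht => ht.1.2)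
    have hLτ : (Λ (τ:ℂ)).re = Real.exp A := by
      have hev : ∀ t : ℝ, τ < t → (Λ (t:ℂ)).re = Real.exp A := by
        intro t hτt
        rcases le_or_gt t s₂ with h | h
        · have htB : t ∉ B := fun htB => absurd (le_csSup hBbdd htB) (not_le.mpr hτt)
          have hmt : ¬ Multipliable (F t) := fun hmt => htB ⟨⟨by linarith, h⟩, hmt⟩
          exact hNM t t (by linarith) le_rfl hmt
        · exact hNM s₂ t hs₂ h.le hm₂
      have ht1 : Filter.Tendsto (fun x : ℝ => (Λ (x:ℂ)).re) (nhdsWithin τ (Set.Ioi τ))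
          (nhds ((Λ (τ:ℂ)).re)) :=
        (hcont.tendsto τ).mono_left nhdsWithin_le_nhds
      have ht2 : Filter.Tendsto (fun x : ℝ => (Λ (x:ℂ)).re) (nhdsWithin τ (Set.Ioi τ))
          (nhds (Real.exp A)) := by
        refine Filter.Tendsto.congr' ?_ tendsto_const_nhds
        filter_upwards [self_mem_nhdsWithin] with x hx
        exact (hev x hx).symm
      exact tendsto_nhds_unique ht1 ht2
    rcases eq_or_lt_of_le hτ1 with he | hlt
    · rw [hA2, ← hLτ, ← he]
    · have hle : ∀ t : ℝ, s₁ ≤ t → t < τ → (Λ (s₁:ℂ)).re ≤ (Λ (t:ℂ)).re := by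
        intro t ht1 ht2
        obtain ⟨b, hbB, htb⟩ := exists_lt_of_lt_csSup hBne ht2
        have htB : Multipliable (F t) :=
          hdown t b (by linarith [hbB.1.1]) (raycond t b (by linarith) htb.le)
            (hFne t (by linarith)) hbB.2
        exact hcomp s₁ t (by linarith) (raycond s₁ t hs₁ ht1) htB
      have ht1 : Filter.Tendsto (fun x : ℝ => (Λ (x:ℂ)).re) (nhdsWithin τ (Set.Iio τ))
          (nhds ((Λ (τ:ℂ)).re)) :=
        (hcont.tendsto τ).mono_left nhdsWithin_le_nhds
      have hfin : (Λ (s₁:ℂ)).re ≤ (Λ (τ:ℂ)).re := by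
        refine ge_of_tendsto ht1 ?_
        filter_upwards [Ioo_mem_nhdsLT_of_mem (show τ ∈ Set.Ioc s₁ τ from ⟨hlt, le_rfl⟩)]
          with t ht
        exact hle t ht.1.le ht.2
      rw [hA2, ← hLτ]
      exact hfin
  refine ⟨?_, ?_, ?_⟩
  · intro x hx y hy hxy
    exact hmono x y (Set.mem_Ici.mp hx) hxy
  · have e2 : ((k:ℝ):ℂ)/2 = ((m:ℝ):ℂ) := by rw [hm]; push_cast; ring
    rw [e2]
    exact (hreal m le_rfl).2
  · intro j
    have e4 : ((k:ℝ):ℂ)/2 + (j:ℕ) = (((m + (j:ℝ)):ℝ):ℂ) := by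
      rw [hm]; push_cast; ring
    have e5 : (((m + (j:ℝ)):ℝ):ℂ) + 1 = (((m + (j:ℝ) + 1):ℝ):ℂ) := by
      push_cast; ring
    rw [e4, e5]
    rcases Nat.eq_zero_or_pos j with rfl | hj
    · simp only [Nat.cast_zero, add_zero]
      have stepcond : ∀ a : ℝ, m - 1/2 < a → a < m + 1/2 → |m - a| ≤ m + 1 - a := by
        intro a h1 h2
        exact abs_le.mpr ⟨by linarith, by linarith⟩
      by_cases hmy : Multipliable (F (m+1))
      · exact hcomp m (m+1) (by linarith) stepcond hmy
      · have hA2 : (Λ (((m+1):ℝ):ℂ)).re = Real.exp A := by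
          rw [hHad' (m+1), tprod_eq_one_of_not_multipliable hmy, mul_one]
        have h1le : ∀ i, |F m i| ≤ 1 := by
          intro i
          by_cases h0 : (ρ i).im = 0
          · rw [hF_real m i h0]
            have hap := ha_pos i
            have hai := ha i
            have e : (1:ℝ) - m/(ρ i).re = ((ρ i).re - m)/(ρ i).re := by field_simp
            rw [e, abs_div, abs_of_pos hap, div_le_one hap]
            exact abs_le.mpr ⟨by linarith, by linarith⟩
          by_cases h1 : 0 < (ρ i).im
          · rw [hF_formula m i h1, abs_of_nonneg (by positivity),
              div_le_one (hden_pos i)]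
            have hai := ha i
            have hsq : (m - (ρ i).re)^2 ≤ (ρ i).re^2 :=
              sq_le_sq' (by linarith) (by linarith)
            linarith
          · rw [hF_cneg m i h0 h1]; norm_num
        have hple : ∏' i, F m i ≤ 1 := by
          by_cases hmx : Multipliable (F m)
          · have hp := hmx.hasProd
            have habs := my_hasProd_abs hp
            have hb : |∏' i, F m i| ≤ 1 := by
              refine le_of_tendsto habs (Filter.Eventually.of_forall fun G => ?_)
              exact Finset.prod_le_one (fun i _ => abs_nonneg _) (fun i _ => h1le i)
            exact le_trans (le_abs_self _) hb
          · rw [tprod_eq_one_of_not_multipliable hmx]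
        rw [hA2, hHad' m]
        nlinarith [Real.exp_pos A, hple]
    · have hj1 : (1:ℝ) ≤ (j:ℝ) := by exact_mod_cast hj
      exact hmono (m + j) (m + j + 1) (by linarith) (by linarith)
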